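/- arXiv:math/0302083 — 2 statements merged into one kernel-verified Lean document; each statement's English description precedes it below -/
import Mathlib

section
/- The number of cyclically reduced words of length exactly N over the alphabet of 2p letters (generators of F_p and their inverses) equals (2p-1)^N + p + (p-1)·(-1)^N for N ≥ 1. -/
/-- A word (list of letters, each a generator index together with a Boolean sign)
is reduced if no two adjacent letters are mutually inverse. -/
def IsReducedWord {p : ℕ} (l : List (Fin p × Bool)) : Prop :=
  List.Chain' (fun a b => b ≠ (a.1, !a.2)) l

/-- A word is cyclically reduced if it is reduced and its first and last letters
are not mutually inverse. -/
def IsCyclicallyReducedWord {p : ℕ} (l : List (Fin p × Bool)) : Prop :=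
  IsReducedWord l ∧ ∀ a ∈ l.head?, ∀ b ∈ l.getLast?, b ≠ (a.1, !a.2)

namespace CRWAux

variable {p : ℕ}

abbrev A (p : ℕ) := Fin p × Bool

/-- formal inverse of a letter -/
def inv (a : A p) : A p := (a.1, !a.2)

@[simp] lemma inv_inv (a : A p) : inv (inv a) = a := by
  cases a; simp [inv]

lemma inv_invol : Function.Involutive (inv (p := p)) := inv_inv

lemma inv_eq_iff {a b : A p} : inv a = b ↔ a = inv b := by
  constructor <;> rintro rfl <;> simp

lemma red_iff (l : List (A p)) :
    IsReducedWord l ↔ List.Chain' (fun a b => b ≠ inv a) l := Iff.rfl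

/-- reduced words of length `N` with first letter `a` and last letter `b`. -/
def W (p N : ℕ) (a b : A p) : Set (List (A p)) :=
  {l | IsReducedWord l ∧ l.length = N ∧ l.head? = some a ∧ l.getLast? = some b}

lemma W_finite (p N : ℕ) (a b : A p) : (W p N a b).Finite :=
  (List.finite_length_eq (A p) N).subset (fun _ h => h.2.1)

/-- ncard of a finite disjoint union. -/
lemma ncard_iUnion_sum {ι β : Type*} [Fintype ι] (S : ι → Set β)
    (hfin : ∀ i, (S i).Finite)
    (hd : ∀ i j, i ≠ j → Disjoint (S i) (S j)) :
    (⋃ i, S i).ncard = ∑ i, (S i).ncard := by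
  classical
  have hU : (⋃ i, S i).Finite := Set.finite_iUnion hfin
  rw [Set.ncard_eq_toFinset_card _ hU]
  have : hU.toFinset = Finset.univ.biUnion fun i => (hfin i).toFinset := by
    ext x; simp
  rw [this, Finset.card_biUnion]
  · exact Finset.sum_congr rfl fun i _ =>
      (Set.ncard_eq_toFinset_card _ (hfin i)).symm
  · intro i _ j _ hij
    simpa [Finset.disjoint_left, Set.disjoint_left] using
      (Set.disjoint_left.mp (hd i j hij))

lemma W_one (a b : A p) : (W p 1 a b).ncard = if b = a then 1 else 0 := by
  have : W p 1 a b = if b = a then {[a]} else (∅ : Set (List (A p))) := by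
    ext l
    constructor
    · rintro ⟨_, hlen, hh, hl⟩
      obtain ⟨x, rfl⟩ := List.length_eq_one_iff.mp hlen
      have hx : x = a := by simpa using hh
      have hxb : x = b := by simpa using hl
      subst hx
      simp [← hxb]
    · intro hl
      by_cases hba : b = a
      · subst hba
        simp only [if_pos rfl, Set.mem_singleton_iff] at hl
        subst hl
        refine ⟨List.isChain_singleton _, rfl, rfl, rfl⟩
      · simp [hba] at hl
  rw [this]
  by_cases hba : b = a <;> simp [hba]

lemma mem_W_concat {m : ℕ} {a b c : A p} (hcb : c ≠ inv b) {w : List (A p)}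
    (hw : w ∈ W p (m+1) a b) : w ++ [c] ∈ W p (m+2) a c := by
  obtain ⟨hred, hlen, hh, hl⟩ := hw
  have hwne : w ≠ [] := by intro h; simp [h] at hlen
  refine ⟨?_, by simp [hlen], ?_, ?_⟩
  · rw [red_iff, List.Chain', List.isChain_append]
    refine ⟨hred, List.isChain_singleton _, ?_⟩
    intro x hx y hy
    rw [hl] at hx
    simp only [Option.mem_def, Option.some_inj] at hx
    simp only [List.head?, Option.mem_def, Option.some_inj] at hy
    subst hx; subst hy
    exact hcb
  · rw [List.head?_append_of_ne_nil _ hwne, hh]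
  · rw [List.getLast?_append_of_ne_nil _ (by simp), ]
    rfl

lemma W_succ_decomp (m : ℕ) (a c : A p) :
    ((W p (m+2) a c).ncard : ℤ)
      = ∑ b : A p, if c = inv b then 0 else ((W p (m+1) a b).ncard : ℤ) := by
  classical
  set S : A p → Set (List (A p)) :=
    fun b => ((· ++ [c]) '' W p (m+1) a b) ∩ W p (m+2) a c with hS
  have hSsub : ∀ b, S b ⊆ W p (m+2) a c := fun b => Set.inter_subset_right
  -- the union of the S b is everything
  have hUnion : (⋃ b, S b) = W p (m+2) a c := by
    apply Set.Subset.antisymm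
    · exact Set.iUnion_subset hSsub
    · intro l hl
      obtain ⟨hred, hlen, hh, hgl⟩ := hl
      have hlne : l ≠ [] := by intro h; simp [h] at hlen
      have hdl : l.dropLast ++ [c] = l := List.dropLast_append_getLast? c hgl
      have hdlen : l.dropLast.length = m + 1 := by
        rw [List.length_dropLast, hlen]
        omega
      have hdne : l.dropLast ≠ [] := by
        intro h; rw [h] at hdlen; simp at hdlen
      obtain ⟨b, hb⟩ : ∃ b, l.dropLast.getLast? = some b := by
        cases h : l.dropLast.getLast? with
        | none => exact absurd (List.getLast?_eq_none_iff.mp h) hdne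
        | some b => exact ⟨b, rfl⟩
      have hredsplit : List.Chain' (fun x y => y ≠ inv x) (l.dropLast ++ [c]) := by
        rw [hdl]; exact hred
      rw [List.Chain', List.isChain_append] at hredsplit
      obtain ⟨hred1, -, hjun⟩ := hredsplit
      have hwmem : l.dropLast ∈ W p (m+1) a b := by
        refine ⟨hred1, hdlen, ?_, hb⟩
        rw [← List.head?_append_of_ne_nil l.dropLast (l₂ := [c]) hdne, hdl]
        exact hh
      refine Set.mem_iUnion.mpr ⟨b, ⟨⟨l.dropLast, hwmem, hdl⟩, ⟨hred, hlen, hh, hgl⟩⟩⟩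
  -- the S b are pairwise disjoint
  have hdisj : ∀ b b' : A p, b ≠ b' → Disjoint (S b) (S b') := by
    intro b b' hne
    rw [Set.disjoint_left]
    rintro l ⟨⟨w, hw, rfl⟩, -⟩ ⟨⟨w', hw', heq⟩, -⟩
    obtain rfl : w' = w := List.append_cancel_right heq
    have h1 := hw.2.2.2
    have h2 := hw'.2.2.2
    rw [h1] at h2
    exact hne (by injection h2)
  have hfin : ∀ b, (S b).Finite := fun b => (W_finite p (m+2) a c).subset (hSsub b)
  have hcard : ∀ b : A p, ((S b).ncard : ℤ)
      = if c = inv b then 0 else ((W p (m+1) a b).ncard : ℤ) := by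
    intro b
    by_cases hcb : c = inv b
    · rw [if_pos hcb]
      have : S b = ∅ := by
        rw [Set.eq_empty_iff_forall_notMem]
        rintro l ⟨⟨w, hw, rfl⟩, hmem⟩
        obtain ⟨hred, -, -, -⟩ := hmem
        rw [red_iff, List.Chain', List.isChain_append] at hred
        obtain ⟨-, -, hjun⟩ := hred
        exact hjun b hw.2.2.2 c rfl hcb
      simp [this]
    · rw [if_neg hcb]
      have : S b = (· ++ [c]) '' W p (m+1) a b := by
        apply Set.inter_eq_left.mpr
        rintro l ⟨w, hw, rfl⟩
        exact mem_W_concat hcb hw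
      rw [this, Set.ncard_image_of_injective _ (List.append_left_injective [c])]
  rw [← hUnion, ncard_iUnion_sum S hfin hdisj]
  push_cast
  exact Finset.sum_congr rfl fun b _ => hcard b

/-- the scalar sequence : q 0 = 0, q (k+1) = (2p-1) q k + (-1)^k -/
def q (p : ℕ) : ℕ → ℤ
  | 0 => 0
  | k + 1 => (2 * p - 1) * q p k + (-1) ^ k

/-- entries of the `k`-th power of the inversion permutation matrix -/
def PN (k : ℕ) (a b : A p) : ℤ :=
  if k % 2 = 0 then (if b = a then 1 else 0) else (if b = inv a then 1 else 0)

lemma PN_shift (k : ℕ) (a c : A p) : PN (k+1) a c = PN k a (inv c) := by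
  have hiff1 : (c = inv a) = (inv c = a) := by
    simp only [eq_iff_iff]
    constructor
    · rintro rfl; simp
    · rintro rfl; simp
  have hiff2 : (c = a) = (inv c = inv a) := by
    simp only [eq_iff_iff]
    exact ⟨by rintro rfl; rfl, fun h => inv_invol.injective h⟩
  unfold PN
  rcases Nat.even_or_odd k with hk | hk
  · have h1 : k % 2 = 0 := Nat.even_iff.mp hk
    have h2 : ¬ ((k+1) % 2 = 0) := by omega
    rw [if_pos h1, if_neg h2]
    exact if_congr (iff_of_eq hiff1) rfl rfl
  · have h1 : ¬ (k % 2 = 0) := by rw [Nat.odd_iff.mp hk]; omega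
    have h2 : (k+1) % 2 = 0 := by rw [Nat.succ_mod_two_eq_zero_iff, Nat.odd_iff.mp hk]
    rw [if_neg h1, if_pos h2]
    exact if_congr (iff_of_eq hiff2) rfl rfl

lemma PN_sum (k : ℕ) (a : A p) : ∑ b : A p, PN k a b = 1 := by
  have e1 : ∀ (x : A p), ∑ b : A p, (if b = x then (1:ℤ) else 0) = 1 := by
    intro x
    rw [Finset.sum_ite_eq' Finset.univ x (fun _ => (1:ℤ))]
    simp
  by_cases h : k % 2 = 0
  · have : ∀ b : A p, PN k a b = (if b = a then (1:ℤ) else 0) := by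
      intro b; unfold PN; rw [if_pos h]
    rw [Finset.sum_congr rfl fun b _ => this b]
    exact e1 a
  · have : ∀ b : A p, PN k a b = (if b = inv a then (1:ℤ) else 0) := by
      intro b; unfold PN; rw [if_neg h]
    rw [Finset.sum_congr rfl fun b _ => this b]
    exact e1 (inv a)

/-- the key closed form for the counts -/
lemma W_card (k : ℕ) (a b : A p) :
    ((W p (k+1) a b).ncard : ℤ) = q p k + (-1) ^ k * PN k a b := by
  induction k generalizing b with
  | zero =>
    by_cases h : b = a <;> simp [W_one, q, PN, h]
  | succ k ih =>
    rw [W_succ_decomp]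
    have hrw : ∀ b' : A p,
        (if b = inv b' then (0:ℤ) else ((W p (k+1) a b').ncard : ℤ))
        = (q p k + (-1)^k * PN k a b')
          - (if b' = inv b then (q p k + (-1)^k * PN k a b') else 0) := by
      intro b'
      by_cases h : b' = inv b
      · have hb : b = inv b' := by rw [h, inv_inv]
        rw [if_pos hb, if_pos h]
        ring
      · have h' : b ≠ inv b' := by
          intro hc; exact h (by rw [hc, inv_inv])
        rw [if_neg h', if_neg h, sub_zero]
        exact ih b' 
    calc (∑ b' : A p, if b = inv b' then (0:ℤ) else ((W p (k+1) a b').ncard : ℤ))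
        = ∑ b' : A p, ((q p k + (-1)^k * PN k a b')
            - (if b' = inv b then (q p k + (-1)^k * PN k a b') else 0)) := by
          exact Finset.sum_congr rfl fun b' _ => hrw b'
      _ = (∑ b' : A p, (q p k + (-1)^k * PN k a b'))
            - (q p k + (-1)^k * PN k a (inv b)) := by
          rw [Finset.sum_sub_distrib,
            Finset.sum_ite_eq' Finset.univ (inv b)
              (fun b' => q p k + (-1)^k * PN k a b')]
          simp
      _ = (2 * p) * q p k + (-1)^k - (q p k + (-1)^k * PN k a (inv b)) := by
          rw [Finset.sum_add_distrib, ← Finset.mul_sum, PN_sum,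
            Finset.sum_const, Finset.card_univ]
          simp only [Fintype.card_prod, Fintype.card_fin, Fintype.card_bool,
            nsmul_eq_mul, mul_one]
          push_cast
          ring
      _ = q p (k+1) + (-1) ^ (k+1) * PN (k+1) a b := by
          rw [PN_shift, q]
          push_cast
          ring

lemma q_val (k : ℕ) : (2 * p : ℤ) * q p k = (2 * p - 1) ^ k - (-1) ^ k := by
  induction k with
  | zero => simp [q]
  | succ k ih =>
    rw [q]
    have : (2 * (p:ℤ)) * ((2 * p - 1) * q p k + (-1) ^ k)
        = (2 * p - 1) * ((2*p:ℤ) * q p k) + 2 * p * (-1)^k := by ring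
    rw [this, ih]
    ring

end CRWAux

open CRWAux in
theorem cyclically_reduced_word_count (p N : ℕ) (hp : 2 ≤ p) (hN : 1 ≤ N) :
    ({l : List (Fin p × Bool) | IsCyclicallyReducedWord l ∧ l.length = N}.ncard : ℤ)
      = (2 * p - 1) ^ N + p + (p - 1) * (-1) ^ N := by
  classical
  obtain ⟨k, rfl⟩ : ∃ k, N = k + 1 := ⟨N - 1, by omega⟩
  set T : Set (List (A p)) :=
    {l | IsCyclicallyReducedWord l ∧ l.length = k + 1} with hT
  set V : A p × A p → Set (List (A p)) :=
    fun ab => W p (k+1) ab.1 ab.2 ∩ T with hV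
  have hTfin : T.Finite := (List.finite_length_eq (A p) (k+1)).subset (fun _ h => h.2)
  have hVfin : ∀ ab, (V ab).Finite := fun ab => hTfin.subset Set.inter_subset_right
  -- T is the union of the V ab
  have hUnion : (⋃ ab, V ab) = T := by
    apply Set.Subset.antisymm
    · exact Set.iUnion_subset fun ab => Set.inter_subset_right
    · intro l hl
      obtain ⟨⟨hred, hcyc⟩, hlen⟩ := hl
      have hlne : l ≠ [] := by intro h; rw [h] at hlen; simp at hlen
      obtain ⟨a, ha⟩ : ∃ a, l.head? = some a := by
        cases h : l.head? with
        | none => exact absurd (List.head?_eq_none_iff.mp h) hlne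
        | some a => exact ⟨a, rfl⟩
      obtain ⟨b, hb⟩ : ∃ b, l.getLast? = some b := by
        cases h : l.getLast? with
        | none => exact absurd (List.getLast?_eq_none_iff.mp h) hlne
        | some b => exact ⟨b, rfl⟩
      exact Set.mem_iUnion.mpr ⟨(a, b), ⟨⟨hred, hlen, ha, hb⟩, ⟨⟨hred, hcyc⟩, hlen⟩⟩⟩
  have hdisj : ∀ ab ab' : A p × A p, ab ≠ ab' → Disjoint (V ab) (V ab') := by
    intro ab ab' hne
    rw [Set.disjoint_left]
    rintro l ⟨⟨-, -, hh, hl⟩, -⟩ ⟨⟨-, -, hh', hl'⟩, -⟩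
    apply hne
    rw [hh] at hh'; rw [hl] at hl'
    have e1 : ab.1 = ab'.1 := by injection hh'
    have e2 : ab.2 = ab'.2 := by injection hl'
    exact Prod.ext e1 e2
  have hVcard : ∀ ab : A p × A p, ((V ab).ncard : ℤ)
      = if ab.2 = inv ab.1 then 0 else ((W p (k+1) ab.1 ab.2).ncard : ℤ) := by
    rintro ⟨a, b⟩
    by_cases h : b = inv a
    · have : V (a, b) = ∅ := by
        rw [Set.eq_empty_iff_forall_notMem]
        rintro l ⟨⟨-, -, hh, hl⟩, ⟨⟨-, hcyc⟩, -⟩⟩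
        exact hcyc a hh b hl h
      rw [if_pos h, this]
      simp
    · have : V (a, b) = W p (k+1) a b := by
        apply Set.inter_eq_left.mpr
        rintro l ⟨hred, hlen, hh, hl⟩
        refine ⟨⟨hred, ?_⟩, hlen⟩
        intro a' ha' b' hb'
        rw [hh] at ha'; rw [hl] at hb'
        obtain rfl : a = a' := by injection ha'
        obtain rfl : b = b' := by injection hb'
        exact h
      rw [if_neg h, this]
  have key : (T.ncard : ℤ)
      = ∑ ab : A p × A p, ((V ab).ncard : ℤ) := by
    rw [← hUnion, ncard_iUnion_sum V hVfin hdisj]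
    push_cast
    rfl
  rw [key]
  have step : ∀ a : A p, (∑ b : A p, ((V (a, b)).ncard : ℤ))
      = (2 * p - 1) * q p k + (-1)^k - (-1)^k * PN k a (inv a) := by
    intro a
    have : ∀ b : A p, ((V (a, b)).ncard : ℤ)
        = (q p k + (-1)^k * PN k a b)
          - (if b = inv a then (q p k + (-1)^k * PN k a b) else 0) := by
      intro b
      rw [hVcard (a, b)]
      by_cases h : b = inv a
      · simp [h]
      · simp [h, W_card]
    rw [Finset.sum_congr rfl fun b _ => this b, Finset.sum_sub_distrib,
      Finset.sum_ite_eq' Finset.univ (inv a) (fun b => q p k + (-1)^k * PN k a b),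
      Finset.sum_add_distrib, ← Finset.mul_sum, PN_sum]
    simp [Finset.card_univ]
    ring
  rw [Fintype.sum_prod_type]
  rw [Finset.sum_congr rfl fun a _ => step a]
  have hPNsum : ∑ a : A p, PN k a (inv a)
      = if k % 2 = 0 then 0 else (2 * p : ℤ) := by
    have hne : ∀ a : A p, inv a ≠ a := by
      rintro ⟨i, s⟩ hc
      simp [inv, Prod.ext_iff] at hc
    by_cases h : k % 2 = 0
    · rw [if_pos h]
      have hz : ∀ a : A p, PN k a (inv a) = 0 := by
        intro a; unfold PN; rw [if_pos h, if_neg (hne a)]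
      rw [Finset.sum_congr rfl fun a _ => hz a]
      simp
    · rw [if_neg h]
      have ho : ∀ a : A p, PN k a (inv a) = 1 := by
        intro a; unfold PN; rw [if_neg h, if_pos rfl]
      rw [Finset.sum_congr rfl fun a _ => ho a, Finset.sum_const,
        Finset.card_univ]
      simp only [Fintype.card_prod, Fintype.card_fin, Fintype.card_bool,
        nsmul_eq_mul, mul_one]
      push_cast
      ring
  rw [Finset.sum_sub_distrib, Finset.sum_const, Finset.card_univ,
    ← Finset.mul_sum, hPNsum]
  have hq := q_val (p := p) k
  rcases Nat.even_or_odd k with hk | hk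
  · have h0 : k % 2 = 0 := Nat.even_iff.mp hk
    have hsgn : (-1 : ℤ)^k = 1 := hk.neg_one_pow
    have hsgn' : (-1 : ℤ)^(k+1) = -1 := by rw [pow_succ, hsgn]; ring
    rw [if_pos h0, hsgn']
    rw [hsgn] at hq
    simp only [hsgn, Fintype.card_prod, Fintype.card_fin, Fintype.card_bool,
      nsmul_eq_mul, mul_one]
    push_cast
    rw [pow_succ]
    linear_combination (2 * (p:ℤ) - 1) * hq
  · have h0 : ¬ (k % 2 = 0) := by rw [Nat.odd_iff.mp hk]; omega
    have hsgn : (-1 : ℤ)^k = -1 := hk.neg_one_pow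
    have hsgn' : (-1 : ℤ)^(k+1) = 1 := by rw [pow_succ, hsgn]; ring
    rw [if_neg h0, hsgn']
    rw [hsgn] at hq
    simp only [hsgn, Fintype.card_prod, Fintype.card_fin, Fintype.card_bool,
      nsmul_eq_mul, mul_one]
    push_cast
    rw [pow_succ]
    linear_combination (2 * (p:ℤ) - 1) * hq
end

section
/- Let b_k be the number of cyclically reduced elements of length k in a set S ⊆ F_2 closed under conjugation, and suppose b_k ≤ P(k) for a polynomial P. Then #{w ∈ S : |w| ≤ N} ≤ Σ_{k=0}^N P(k)·2·3^{⌊(N−k)/2⌋}, and hence limsup_N (#{w ∈ S : |w| ≤ N})^{1/N} ≤ √3, giving exponential growth rate d(S) = limsup (#{w∈S:|w|≤N}/(2·3^N−1))^{1/N} ≤ 1/√3. -/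
open Filter

/-- An element of a free group is cyclically reduced if its reduced word does not
begin and end with mutually inverse letters. -/
def IsCyclicallyReduced (w : FreeGroup (Fin 2)) : Prop :=
  ∀ a ∈ w.toWord.head?, ∀ b ∈ w.toWord.getLast?, b ≠ (a.1, !a.2)

namespace BVaux

abbrev α2 := Fin 2 × Bool

def Rr (a b : α2) : Prop := a ≠ (b.1, !b.2)

lemma flip_eq {a b : α2} : a = (b.1, !b.2) ↔ b = (a.1, !a.2) := by
  constructor <;> rintro rfl <;> simp

lemma reduce_eq_self_iff (l : List α2) : FreeGroup.reduce l = l ↔ l.Chain' Rr := by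
  induction l with
  | nil => simp [List.Chain']
  | cons x l ih =>
    rw [FreeGroup.reduce.cons]
    have hlen : (FreeGroup.reduce l).length ≤ l.length :=
      FreeGroup.Red.length_le (FreeGroup.reduce.red)
    cases hr : FreeGroup.reduce l with
    | nil =>
      show [x] = x :: l ↔ _
      constructor
      · intro h
        injection h with _ h2
        rw [← h2]
        exact List.isChain_singleton x
      · intro h
        have h1 : FreeGroup.reduce l = l := ih.mpr h.tail
        rw [hr] at h1
        rw [← h1]
    | cons hd tl =>
      rw [hr] at hlen
      show (if x.1 = hd.1 ∧ x.2 = !hd.2 then tl else x :: hd :: tl) = x :: l ↔ _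
      by_cases hc : x.1 = hd.1 ∧ x.2 = !hd.2
      · rw [if_pos hc]
        constructor
        · intro h
          exfalso
          have := congrArg List.length h
          simp at this hlen
          omega
        · intro h
          exfalso
          have h1 : FreeGroup.reduce l = l := ih.mpr h.tail
          rw [hr] at h1
          have heq : l = hd :: tl := h1.symm
          subst heq
          exact (List.isChain_cons_cons.mp h).1 (Prod.ext hc.1 hc.2)
      · rw [if_neg hc]
        constructor
        · intro h
          injection h with _ h2
          have heq : l = hd :: tl := h2.symm
          subst heq
          refine List.isChain_cons_cons.mpr ⟨?_, ih.mp hr⟩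
          intro heq
          exact hc ⟨by rw [heq], by rw [heq]⟩
        · intro h
          have h1 : FreeGroup.reduce l = l := ih.mpr h.tail
          rw [hr] at h1
          rw [h1]

lemma chain'_toWord (w : FreeGroup (Fin 2)) : w.toWord.Chain' Rr :=
  (reduce_eq_self_iff _).mp w.reduce_toWord

lemma toWord_mk_eq {l : List α2} (h : l.Chain' Rr) : (FreeGroup.mk l).toWord = l := by
  rw [FreeGroup.toWord_mk, (reduce_eq_self_iff l).mpr h]

lemma norm_eq_length (x : FreeGroup (Fin 2)) : x.norm = x.toWord.length := rfl

lemma norm_mk_eq {l : List α2} (h : l.Chain' Rr) : (FreeGroup.mk l).norm = l.length := by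
  rw [norm_eq_length, toWord_mk_eq h]


def strip : List α2 → List α2 × List α2
  | [] => ([], [])
  | a :: l =>
    if l.getLast? = some (a.1, !a.2) then
      ((strip l.dropLast).1, a :: (strip l.dropLast).2)
    else (a :: l, [])
termination_by l => l.length
decreasing_by simp [List.length_dropLast]

lemma strip_spec (l : List α2) :
    l = (strip l).2 ++ (strip l).1 ++ FreeGroup.invRev (strip l).2 ∧
    ∀ x ∈ (strip l).1.head?, ∀ y ∈ (strip l).1.getLast?, y ≠ (x.1, !x.2) := by
  induction l using strip.induct with
  | case1 => simp [strip, FreeGroup.invRev]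
  | case2 a l hcond ih =>
    rw [strip, if_pos hcond]
    obtain ⟨ih1, ih2⟩ := ih
    constructor
    · have hl : l.dropLast ++ [(a.1, !a.2)] = l :=
        List.dropLast_append_getLast? _ hcond
      conv_lhs => rw [← hl, ih1]
      simp [FreeGroup.invRev, List.append_assoc]
    · exact ih2
  | case3 a l hcond =>
    rw [strip, if_neg hcond]
    constructor
    · simp [FreeGroup.invRev]
    · intro x hx y hy
      simp at hx
      subst hx
      cases l with
      | nil =>
        simp at hy
        subst hy
        simp [Prod.ext_iff]
      | cons c m =>
        rw [List.getLast?_cons_cons] at hy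
        intro hcontra
        exact hcond (by rw [← hcontra]; exact hy)

lemma exists_decomp (w : FreeGroup (Fin 2)) :
    ∃ u v : FreeGroup (Fin 2), w = v * u * v⁻¹ ∧ IsCyclicallyReduced u ∧
      u.norm + 2 * v.norm = w.norm := by
  obtain ⟨hdec, hcyc⟩ := strip_spec w.toWord
  set u := (strip w.toWord).1 with hu'
  set p := (strip w.toWord).2 with hp'
  have hchain : w.toWord.Chain' Rr := chain'_toWord w
  have hu : u.Chain' Rr := hchain.infix ⟨p, FreeGroup.invRev p, hdec.symm⟩
  have hp : p.Chain' Rr := hchain.prefix ⟨u ++ FreeGroup.invRev p, by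
    rw [← List.append_assoc]; exact hdec.symm⟩
  refine ⟨FreeGroup.mk u, FreeGroup.mk p, ?_, ?_, ?_⟩
  · conv_lhs => rw [← FreeGroup.mk_toWord (x := w)]
    rw [FreeGroup.inv_mk, FreeGroup.mul_mk, FreeGroup.mul_mk, ← hdec]
  · intro a ha b hb
    rw [toWord_mk_eq hu] at ha hb
    exact hcyc a ha b hb
  · rw [norm_mk_eq hu, norm_mk_eq hp, norm_eq_length]
    conv_rhs => rw [hdec]
    simp [FreeGroup.invRev]
    omega

def Wset (j : ℕ) : Set (List α2) := {l | l.Chain' Rr ∧ l.length = j}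

lemma Wset_finite (j : ℕ) : (Wset j).Finite :=
  (List.finite_length_eq α2 j).subset fun _ hl => hl.2

lemma ncard_biUnion_le {ι γ : Type*} (s : Finset ι) (t : ι → Set γ) :
    (⋃ i ∈ s, t i).ncard ≤ ∑ i ∈ s, (t i).ncard := by
  classical
  induction s using Finset.induction with
  | empty => simp
  | @insert a s h ih =>
    rw [Finset.sum_insert h, Finset.set_biUnion_insert]
    exact le_trans (Set.ncard_union_le _ _) (by omega)

lemma ncard_Wset_one : (Wset 1).ncard ≤ 4 := by
  have hsub : Wset 1 ⊆ (fun a : α2 => [a]) '' Set.univ := by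
    rintro l ⟨-, hlen⟩
    match l, hlen with
    | [a], _ => exact ⟨a, trivial, rfl⟩
  calc (Wset 1).ncard ≤ ((fun a : α2 => [a]) '' Set.univ).ncard :=
        Set.ncard_le_ncard hsub (Set.finite_univ.image _)
    _ ≤ (Set.univ : Set α2).ncard := Set.ncard_image_le Set.finite_univ
    _ = 4 := by rw [Set.ncard_univ]; simp [Nat.card_eq_fintype_card]

lemma ncard_Wset_succ (j : ℕ) : (Wset (j + 2)).ncard ≤ 3 * (Wset (j + 1)).ncard := by
  classical
  set s := (Wset_finite (j + 2)).toFinset with hs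
  set t := (Wset_finite (j + 1)).toFinset with ht
  have hmaps : ∀ l ∈ s, l.tail ∈ t := by
    intro l hl
    rw [hs, Set.Finite.mem_toFinset] at hl
    rw [ht, Set.Finite.mem_toFinset]
    exact ⟨hl.1.tail, by simp [List.length_tail, hl.2]⟩
  have hfib : ∀ b ∈ t, ((s.filter (fun l => l.tail = b)).card ≤ 3) := by
    intro b hb
    rw [ht, Set.Finite.mem_toFinset] at hb
    obtain ⟨hbch, hblen⟩ := hb
    cases b with
    | nil => simp at hblen
    | cons c m =>
      have hsub : s.filter (fun l => l.tail = c :: m) ⊆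
          Finset.image (fun x : α2 => x :: c :: m) ({(c.1, !c.2)}ᶜ : Finset α2) := by
        intro l hl
        rw [Finset.mem_filter] at hl
        obtain ⟨hls, hlt⟩ := hl
        rw [hs, Set.Finite.mem_toFinset] at hls
        obtain ⟨hlch, hllen⟩ := hls
        cases l with
        | nil => simp at hllen
        | cons x l' =>
          simp only [List.tail_cons] at hlt
          subst hlt
          rw [Finset.mem_image]
          refine ⟨x, ?_, rfl⟩
          rw [Finset.mem_compl, Finset.mem_singleton]
          exact (List.isChain_cons_cons.mp hlch).1
      calc (s.filter (fun l => l.tail = c :: m)).card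
          ≤ _ := Finset.card_le_card hsub
        _ ≤ ({(c.1, !c.2)}ᶜ : Finset α2).card := Finset.card_image_le
        _ = 3 := by rw [Finset.card_compl]; simp
  have := Finset.card_le_mul_card_image_of_maps_to hmaps 3 hfib
  rwa [Set.ncard_eq_toFinset_card _ (Wset_finite (j+2)),
    Set.ncard_eq_toFinset_card _ (Wset_finite (j+1))]

lemma ncard_Wset_succ_le (j : ℕ) : (Wset (j + 1)).ncard ≤ 4 * 3 ^ j := by
  induction j with
  | zero => simpa using ncard_Wset_one
  | succ j ih =>
    calc (Wset (j + 2)).ncard ≤ 3 * (Wset (j + 1)).ncard := ncard_Wset_succ j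
      _ ≤ 3 * (4 * 3 ^ j) := by omega
      _ = 4 * 3 ^ (j + 1) := by ring

lemma sum_Wset_le (m : ℕ) : ∑ j ∈ Finset.range (m + 1), (Wset j).ncard ≤ 2 * 3 ^ m := by
  have key : ∀ m : ℕ, ∑ j ∈ Finset.range (m + 1), (Wset j).ncard ≤ 2 * 3 ^ m - 1 := by
    intro m
    induction m with
    | zero =>
      simp only [Nat.zero_add, Finset.range_one, Finset.sum_singleton]
      have : Wset 0 ⊆ {[]} := by rintro l ⟨-, hl⟩; simp [List.length_eq_zero_iff.mp hl]
      calc (Wset 0).ncard ≤ ({[]} : Set (List α2)).ncard :=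
            Set.ncard_le_ncard this (Set.finite_singleton _)
        _ = 1 := Set.ncard_singleton _
    | succ m ih =>
      rw [Finset.sum_range_succ]
      have h1 := ncard_Wset_succ_le m
      have h2 : 1 ≤ 3 ^ m := Nat.one_le_pow _ _ (by norm_num)
      have h3 : (3:ℕ) ^ (m + 1) = 3 ^ m * 3 := pow_succ 3 m
      omega
  have := key m
  omega

lemma V_finite (m : ℕ) : {v : FreeGroup (Fin 2) | v.norm ≤ m}.Finite := by
  have : {v : FreeGroup (Fin 2) | v.norm ≤ m} =
      FreeGroup.toWord ⁻¹' {l : List α2 | l.length ≤ m} := rfl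
  rw [this]
  exact (List.finite_length_le α2 m).preimage (FreeGroup.toWord_injective.injOn)

lemma V_card (m : ℕ) : {v : FreeGroup (Fin 2) | v.norm ≤ m}.ncard ≤ 2 * 3 ^ m := by
  have himg : FreeGroup.toWord '' {v : FreeGroup (Fin 2) | v.norm ≤ m} ⊆
      ⋃ j ∈ Finset.range (m + 1), Wset j := by
    rintro l ⟨v, hv, rfl⟩
    simp only [Set.mem_iUnion, Finset.mem_range]
    exact ⟨v.toWord.length, by rw [← norm_eq_length]; exact Nat.lt_succ_of_le hv,
      chain'_toWord v, rfl⟩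
  calc {v : FreeGroup (Fin 2) | v.norm ≤ m}.ncard
      = (FreeGroup.toWord '' {v : FreeGroup (Fin 2) | v.norm ≤ m}).ncard :=
        (Set.ncard_image_of_injective _ FreeGroup.toWord_injective).symm
    _ ≤ (⋃ j ∈ Finset.range (m + 1), Wset j).ncard := by
        refine Set.ncard_le_ncard himg ?_
        exact Set.Finite.biUnion (Finset.range (m+1)).finite_toSet fun j _ => Wset_finite j
    _ ≤ ∑ j ∈ Finset.range (m + 1), (Wset j).ncard := ncard_biUnion_le _ _
    _ ≤ 2 * 3 ^ m := sum_Wset_le m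

lemma ncard_prod {γ : Type*} (s t : Set γ) : (s ×ˢ t).ncard = s.ncard * t.ncard := by
  rw [← Nat.card_coe_set_eq, ← Nat.card_coe_set_eq, ← Nat.card_coe_set_eq,
    ← Nat.card_prod]
  exact Nat.card_congr (Equiv.Set.prod s t)

theorem part1 (S : Set (FreeGroup (Fin 2)))
    (hconj : ∀ w ∈ S, ∀ v : FreeGroup (Fin 2), v * w * v⁻¹ ∈ S)
    (b : ℕ → ℕ)
    (hb : ∀ k, b k = {w ∈ S | IsCyclicallyReduced w ∧ FreeGroup.norm w = k}.ncard)
    (P : Polynomial ℝ) (hP : ∀ k : ℕ, (b k : ℝ) ≤ P.eval (k : ℝ)) (N : ℕ) :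
    ({w ∈ S | FreeGroup.norm w ≤ N}.ncard : ℝ)
        ≤ ∑ k ∈ Finset.range (N + 1), P.eval (k : ℝ) * 2 * 3 ^ ((N - k) / 2) := by
  classical
  set T : ℕ → Set (FreeGroup (Fin 2)) :=
    fun k => {w ∈ S | IsCyclicallyReduced w ∧ FreeGroup.norm w = k} with hT
  set V : ℕ → Set (FreeGroup (Fin 2)) :=
    fun k => {v | FreeGroup.norm v ≤ (N - k) / 2} with hV
  have hTfin : ∀ k, (T k).Finite := fun k =>
    (V_finite k).subset fun w hw => le_of_eq hw.2.2
  have hVfin : ∀ k, (V k).Finite := fun k => V_finite _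
  have hsub : {w ∈ S | FreeGroup.norm w ≤ N} ⊆
      ⋃ k ∈ Finset.range (N + 1),
        (fun p : FreeGroup (Fin 2) × FreeGroup (Fin 2) => p.2 * p.1 * p.2⁻¹) ''
          (T k ×ˢ V k) := by
    rintro w ⟨hwS, hwN⟩
    obtain ⟨u, v, hw, hcyc, hnorm⟩ := exists_decomp w
    have huS : u ∈ S := by
      have := hconj w hwS v⁻¹
      rw [inv_inv] at this
      have heq : v⁻¹ * w * v = u := by rw [hw]; group
      rwa [heq] at this
    simp only [Set.mem_iUnion, Finset.mem_range]
    refine ⟨u.norm, by omega, ⟨⟨u, v⟩, ⟨⟨huS, hcyc, rfl⟩, ?_⟩, hw.symm⟩⟩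
    show v.norm ≤ (N - u.norm) / 2
    rw [Nat.le_div_iff_mul_le (by norm_num)]
    omega
  have hnat : {w ∈ S | FreeGroup.norm w ≤ N}.ncard ≤
      ∑ k ∈ Finset.range (N + 1), (T k).ncard * (V k).ncard := by
    calc {w ∈ S | FreeGroup.norm w ≤ N}.ncard
        ≤ (⋃ k ∈ Finset.range (N + 1),
            (fun p : FreeGroup (Fin 2) × FreeGroup (Fin 2) => p.2 * p.1 * p.2⁻¹) ''
              (T k ×ˢ V k)).ncard := by
          refine Set.ncard_le_ncard hsub ?_
          exact Set.Finite.biUnion (Finset.range (N+1)).finite_toSet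
            fun k _ => (((hTfin k).prod (hVfin k)).image _)
      _ ≤ ∑ k ∈ Finset.range (N + 1),
            ((fun p : FreeGroup (Fin 2) × FreeGroup (Fin 2) => p.2 * p.1 * p.2⁻¹) ''
              (T k ×ˢ V k)).ncard := ncard_biUnion_le _ _
      _ ≤ ∑ k ∈ Finset.range (N + 1), (T k).ncard * (V k).ncard := by
          refine Finset.sum_le_sum fun k _ => ?_
          calc _ ≤ (T k ×ˢ V k).ncard := Set.ncard_image_le ((hTfin k).prod (hVfin k))
            _ = (T k).ncard * (V k).ncard := ncard_prod _ _
  calc ({w ∈ S | FreeGroup.norm w ≤ N}.ncard : ℝ)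
      ≤ ((∑ k ∈ Finset.range (N + 1), (T k).ncard * (V k).ncard : ℕ) : ℝ) := by
        exact_mod_cast hnat
    _ = ∑ k ∈ Finset.range (N + 1), ((T k).ncard : ℝ) * ((V k).ncard : ℝ) := by
        push_cast; rfl
    _ ≤ ∑ k ∈ Finset.range (N + 1), P.eval (k : ℝ) * 2 * 3 ^ ((N - k) / 2) := by
        refine Finset.sum_le_sum fun k _ => ?_
        have h1 : ((T k).ncard : ℝ) = (b k : ℝ) := by rw [hb k]
        have h2 : ((V k).ncard : ℝ) ≤ 2 * 3 ^ ((N - k) / 2) := by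
          have := V_card ((N - k) / 2)
          calc ((V k).ncard : ℝ) ≤ ((2 * 3 ^ ((N - k) / 2) : ℕ) : ℝ) := by exact_mod_cast this
            _ = 2 * 3 ^ ((N - k) / 2) := by push_cast; ring
        rw [h1]
        have hbk : (0:ℝ) ≤ (b k : ℝ) := Nat.cast_nonneg _
        calc (b k : ℝ) * ((V k).ncard : ℝ) ≤ P.eval (k:ℝ) * (2 * 3 ^ ((N - k) / 2)) := by
              apply mul_le_mul (hP k) h2 (Nat.cast_nonneg _) (le_trans hbk (hP k))
          _ = P.eval (k : ℝ) * 2 * 3 ^ ((N - k) / 2) := by ring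

lemma limsup_rpow_le {f : ℕ → ℝ} {D s : ℝ} {m : ℕ} (hs : 0 < s)
    (h0 : ∀ N, 0 ≤ f N) (hf : ∀ N, f N ≤ D * (N + 1) ^ m * s ^ N) :
    limsup (fun N : ℕ => f N ^ ((N : ℝ)⁻¹)) atTop ≤ s := by
  have hg0 : ∀ N, 0 ≤ f N ^ ((N : ℝ)⁻¹) := fun N => Real.rpow_nonneg (h0 N) _
  have hcob : IsCoboundedUnder (· ≤ ·) atTop (fun N : ℕ => f N ^ ((N : ℝ)⁻¹)) :=
    isCoboundedUnder_le_of_le atTop (x := 0) hg0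
  refine le_of_forall_pos_le_add fun ε hε => ?_
  refine limsup_le_of_le hcob ?_
  set r := (s + ε) / s with hr
  have hr1 : 1 < r := by rw [hr, lt_div_iff₀ hs]; linarith
  have hr0 : 0 < r := lt_trans one_pos hr1
  have ht : Tendsto (fun n : ℕ => (n : ℝ) ^ m / r ^ n) atTop (nhds 0) :=
    tendsto_pow_const_div_const_pow_of_one_lt m hr1
  have ht2 : Tendsto (fun n : ℕ => ((n + 1 : ℕ) : ℝ) ^ m / r ^ (n + 1)) atTop (nhds 0) :=
    ht.comp (tendsto_add_atTop_nat 1)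
  have ht3 : Tendsto (fun n : ℕ => (D * r) * (((n + 1 : ℕ) : ℝ) ^ m / r ^ (n + 1)))
      atTop (nhds 0) := by simpa using ht2.const_mul (D * r)
  have hev : ∀ᶠ N in atTop, (D * r) * (((N + 1 : ℕ) : ℝ) ^ m / r ^ (N + 1)) < 1 :=
    ht3.eventually_lt_const one_pos
  filter_upwards [hev, eventually_ge_atTop 1] with N hN hN1
  have hrp : (0:ℝ) < r ^ (N + 1) := pow_pos hr0 _
  have h' : D * r * (((N + 1 : ℕ) : ℝ) ^ m) < r ^ (N + 1) := by
    rw [← mul_div_assoc] at hN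
    exact (div_lt_one hrp).mp hN
  have hb1 : D * ((N:ℝ) + 1) ^ m * r < r ^ (N + 1) := by
    push_cast at h'
    calc D * ((N:ℝ) + 1) ^ m * r = D * r * ((N:ℝ) + 1) ^ m := by ring
      _ < r ^ (N + 1) := h'
  have hb2 : D * ((N:ℝ) + 1) ^ m ≤ r ^ N := by
    have h2 : D * ((N:ℝ) + 1) ^ m * r < r ^ N * r := by rw [← pow_succ]; exact hb1
    exact le_of_lt (lt_of_mul_lt_mul_right h2 hr0.le)
  have hfN : f N ≤ (s + ε) ^ N := by
    calc f N ≤ D * ((N:ℝ) + 1) ^ m * s ^ N := hf N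
      _ ≤ r ^ N * s ^ N := by
          apply mul_le_mul_of_nonneg_right hb2 (pow_nonneg hs.le N)
      _ = (r * s) ^ N := (mul_pow r s N).symm
      _ = (s + ε) ^ N := by rw [hr, div_mul_cancel₀ _ hs.ne']
  have hse : (0:ℝ) < s + ε := by linarith
  calc f N ^ ((N:ℝ)⁻¹) ≤ ((s + ε) ^ N) ^ ((N:ℝ)⁻¹) :=
        Real.rpow_le_rpow (h0 N) hfN (by positivity)
    _ = s + ε := by
        rw [← Real.rpow_natCast (s + ε) N, ← Real.rpow_mul hse.le,
          mul_inv_cancel₀ (Nat.cast_ne_zero.mpr (by omega)),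
          Real.rpow_one]

lemma poly_bound (P : Polynomial ℝ) :
    ∃ C : ℝ, 0 ≤ C ∧ ∀ N k : ℕ, k ≤ N →
      P.eval (k : ℝ) ≤ C * ((N : ℝ) + 1) ^ P.natDegree := by
  set d := P.natDegree with hd
  refine ⟨∑ i ∈ Finset.range (d + 1), |P.coeff i|, Finset.sum_nonneg fun i _ => abs_nonneg _,
    fun N k hk => ?_⟩
  have hN1 : (1:ℝ) ≤ (N:ℝ) + 1 := by
    have h0N : (0:ℝ) ≤ (N:ℝ) := Nat.cast_nonneg N
    linarith
  rw [Polynomial.eval_eq_sum_range]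
  calc ∑ i ∈ Finset.range (d + 1), P.coeff i * (k:ℝ) ^ i
      ≤ ∑ i ∈ Finset.range (d + 1), |P.coeff i| * ((N:ℝ) + 1) ^ d := by
        refine Finset.sum_le_sum fun i hi => ?_
        have hki : (k:ℝ) ^ i ≤ ((N:ℝ) + 1) ^ d := by
          calc (k:ℝ) ^ i ≤ ((N:ℝ) + 1) ^ i := by
                apply pow_le_pow_left₀ (Nat.cast_nonneg _)
                have : (k:ℝ) ≤ (N:ℝ) := by exact_mod_cast hk
                linarith
            _ ≤ ((N:ℝ) + 1) ^ d := by
                apply pow_le_pow_right₀ hN1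
                exact Nat.lt_succ_iff.mp (Finset.mem_range.mp hi)
        calc P.coeff i * (k:ℝ) ^ i ≤ |P.coeff i| * (k:ℝ) ^ i :=
              mul_le_mul_of_nonneg_right (le_abs_self _) (by positivity)
          _ ≤ |P.coeff i| * ((N:ℝ) + 1) ^ d :=
              mul_le_mul_of_nonneg_left hki (abs_nonneg _)
    _ = (∑ i ∈ Finset.range (d + 1), |P.coeff i|) * ((N:ℝ) + 1) ^ d :=
        (Finset.sum_mul _ _ _).symm


end BVaux

theorem conj_closed_growth_bound (S : Set (FreeGroup (Fin 2)))
    (hconj : ∀ w ∈ S, ∀ v : FreeGroup (Fin 2), v * w * v⁻¹ ∈ S)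
    (b : ℕ → ℕ)
    (hb : ∀ k, b k = {w ∈ S | IsCyclicallyReduced w ∧ FreeGroup.norm w = k}.ncard)
    (P : Polynomial ℝ) (hP : ∀ k : ℕ, (b k : ℝ) ≤ P.eval (k : ℝ)) :
    (∀ N : ℕ, ({w ∈ S | FreeGroup.norm w ≤ N}.ncard : ℝ)
        ≤ ∑ k ∈ Finset.range (N + 1), P.eval (k : ℝ) * 2 * 3 ^ ((N - k) / 2)) ∧
    limsup (fun N : ℕ =>
        (({w ∈ S | FreeGroup.norm w ≤ N}.ncard : ℝ)) ^ ((N : ℝ)⁻¹)) atTop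
      ≤ Real.sqrt 3 ∧
    limsup (fun N : ℕ =>
        (({w ∈ S | FreeGroup.norm w ≤ N}.ncard : ℝ) / (2 * 3 ^ N - 1 : ℝ)) ^ ((N : ℝ)⁻¹))
      atTop ≤ 1 / Real.sqrt 3 := by
  have h1 := BVaux.part1 S hconj b hb P hP
  refine ⟨h1, ?_⟩
  obtain ⟨C, hC0, hC⟩ := BVaux.poly_bound P
  set d := P.natDegree with hd
  set D := 2 * C + 1 with hD
  set a : ℕ → ℝ := fun N => ({w ∈ S | FreeGroup.norm w ≤ N}.ncard : ℝ) with ha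
  have ha0 : ∀ N, 0 ≤ a N := fun N => Nat.cast_nonneg _
  have hsqrt1 : (1:ℝ) ≤ Real.sqrt 3 := by
    rw [show (1:ℝ) = Real.sqrt 1 by simp]
    exact Real.sqrt_le_sqrt (by norm_num)
  have hsqrt0 : (0:ℝ) < Real.sqrt 3 := lt_of_lt_of_le one_pos hsqrt1
  have hkey3 : ∀ N : ℕ, Real.sqrt 3 ^ N * Real.sqrt 3 ^ N = 3 ^ N := fun N => by
    rw [← mul_pow, Real.mul_self_sqrt (by norm_num)]
  have h32 : ∀ N : ℕ, (3:ℝ) ^ (N / 2) ≤ Real.sqrt 3 ^ N := by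
    intro N
    have h1' : ((3:ℝ)) ^ (N / 2) = Real.sqrt 3 ^ (2 * (N / 2)) := by
      rw [pow_mul, Real.sq_sqrt (by norm_num)]
    rw [h1']
    exact pow_le_pow_right₀ hsqrt1 (by omega)
  have hKey : ∀ N : ℕ, a N ≤ D * ((N:ℝ) + 1) ^ (d + 1) * Real.sqrt 3 ^ N := by
    intro N
    have hPk0 : ∀ k : ℕ, (0:ℝ) ≤ P.eval (k:ℝ) := fun k =>
      le_trans (Nat.cast_nonneg _) (hP k)
    calc a N ≤ ∑ k ∈ Finset.range (N + 1), P.eval (k : ℝ) * 2 * 3 ^ ((N - k) / 2) := h1 N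
      _ ≤ ∑ _k ∈ Finset.range (N + 1), C * ((N:ℝ) + 1) ^ d * 2 * 3 ^ (N / 2) := by
          refine Finset.sum_le_sum fun k hk => ?_
          have hkN : k ≤ N := Nat.lt_succ_iff.mp (Finset.mem_range.mp hk)
          have h3e : (3:ℝ) ^ ((N - k) / 2) ≤ 3 ^ (N / 2) :=
            pow_le_pow_right₀ (by norm_num) (Nat.div_le_div_right (Nat.sub_le N k))
          have hCN : (0:ℝ) ≤ C * ((N:ℝ) + 1) ^ d * 2 := by positivity
          calc P.eval (k : ℝ) * 2 * 3 ^ ((N - k) / 2)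
              ≤ C * ((N:ℝ) + 1) ^ d * 2 * 3 ^ ((N - k) / 2) := by
                apply mul_le_mul_of_nonneg_right _ (by positivity)
                exact mul_le_mul_of_nonneg_right (hC N k hkN) (by norm_num)
            _ ≤ C * ((N:ℝ) + 1) ^ d * 2 * 3 ^ (N / 2) :=
                mul_le_mul_of_nonneg_left h3e hCN
      _ = ((N:ℝ) + 1) * (C * ((N:ℝ) + 1) ^ d * 2 * 3 ^ (N / 2)) := by
          rw [Finset.sum_const, Finset.card_range, nsmul_eq_mul]
          push_cast; ring
      _ = (2 * C) * ((N:ℝ) + 1) ^ (d + 1) * 3 ^ (N / 2) := by rw [pow_succ]; ring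
      _ ≤ D * ((N:ℝ) + 1) ^ (d + 1) * Real.sqrt 3 ^ N := by
          have hx : (0:ℝ) ≤ ((N:ℝ) + 1) ^ (d + 1) := by positivity
          apply mul_le_mul
          · apply mul_le_mul_of_nonneg_right _ hx
            rw [hD]; linarith
          · exact h32 N
          · positivity
          · positivity
  constructor
  · exact BVaux.limsup_rpow_le hsqrt0 ha0 hKey
  · have hinv0 : (0:ℝ) < 1 / Real.sqrt 3 := by positivity
    refine BVaux.limsup_rpow_le (D := D) (m := d + 1) hinv0 ?_ ?_
    · intro N
      have h3N : (1:ℝ) ≤ 3 ^ N := one_le_pow₀ (by norm_num)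
      have hden : (0:ℝ) < 2 * 3 ^ N - 1 := by linarith
      positivity
    · intro N
      have h3N : (1:ℝ) ≤ 3 ^ N := one_le_pow₀ (by norm_num)
      have hden : (0:ℝ) < 2 * 3 ^ N - 1 := by linarith
      have hDpos : (0:ℝ) ≤ D * ((N:ℝ) + 1) ^ (d + 1) := by
        rw [hD]; positivity
      have hstep : (Real.sqrt 3) ^ N ≤ (1 / Real.sqrt 3) ^ N * (2 * 3 ^ N - 1) := by
        have hne : Real.sqrt 3 ^ N ≠ 0 := by positivity
        have h2 : (1 / Real.sqrt 3) ^ N * (3:ℝ) ^ N = Real.sqrt 3 ^ N := by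
          rw [div_pow, one_pow, one_div, ← hkey3 N, ← mul_assoc,
            inv_mul_cancel₀ hne, one_mul]
        calc (Real.sqrt 3) ^ N = (1 / Real.sqrt 3) ^ N * (3:ℝ) ^ N := h2.symm
          _ ≤ (1 / Real.sqrt 3) ^ N * (2 * 3 ^ N - 1) := by
              apply mul_le_mul_of_nonneg_left (by linarith) (by positivity)
      rw [div_le_iff₀ hden]
      calc a N ≤ D * ((N:ℝ) + 1) ^ (d + 1) * Real.sqrt 3 ^ N := hKey N
        _ ≤ D * ((N:ℝ) + 1) ^ (d + 1) * ((1 / Real.sqrt 3) ^ N * (2 * 3 ^ N - 1)) :=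
            mul_le_mul_of_nonneg_left hstep hDpos
        _ = D * ((N:ℝ) + 1) ^ (d + 1) * (1 / Real.sqrt 3) ^ N * (2 * 3 ^ N - 1) := by ring
end
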